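/- Let X ⊂ ℝ^d be relatively separated, s > d, H a Hilbert space. Then there exists C > 0 such that ‖A‖_{B(ℓ²(X;H))} ≤ C‖A‖_{J_s} for every A ∈ J_s; in particular, every matrix in the Jaffard class defines a bounded operator on ℓ²(X;H). -/

import Mathlib

open scoped BigOperators

noncomputable section

abbrev E (d : ℕ) := EuclideanSpace ℝ (Fin d)

/-- `X ⊂ ℝ^d` is relatively separated: the number of points of `X` in any
translated unit cube is uniformly bounded. -/
def RelSep {d : ℕ} (X : Set (E d)) : Prop :=
  ∃ N : ℕ, ∀ x : E d,
    (X ∩ {y | ∀ i, x i ≤ y i ∧ y i ≤ x i + 1}).Finite ∧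
    (X ∩ {y | ∀ i, x i ≤ y i ∧ y i ≤ x i + 1}).ncard ≤ N

lemma int_summable {t : ℝ} (ht : 1 < t) :
    Summable (fun m : ℤ => (1 + |(m : ℝ)|) ^ (-t)) := by
  have h := (Real.summable_one_div_int_add_rpow (1/2) t).2 ht
  refine Summable.of_nonneg_of_le (fun m => by positivity) (fun m => ?_) h
  have h1 : (1:ℝ)/2 ≤ |(m:ℝ) + 1/2| := by
    rcases le_or_gt 0 (m:ℝ) with hm | hm
    · rw [abs_of_nonneg (by linarith)]; linarith
    · have hm1 : m ≤ -1 := by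
        have : m < 0 := by exact_mod_cast hm
        omega
      have hm1' : (m:ℝ) ≤ -1 := by exact_mod_cast hm1
      rw [abs_of_nonpos (by linarith)]; linarith
  have h2 : |(m:ℝ) + 1/2| ≤ 1 + |(m:ℝ)| := by
    calc |(m:ℝ) + 1/2| ≤ |(m:ℝ)| + |(1:ℝ)/2| := abs_add_le _ _
      _ = |(m:ℝ)| + 1/2 := by norm_num
      _ ≤ 1 + |(m:ℝ)| := by linarith
  have h3 := Real.rpow_le_rpow_of_nonpos (by linarith : (0:ℝ) < |(m:ℝ)+1/2|) h2
    (by linarith : -t ≤ 0)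
  calc (1 + |(m:ℝ)|) ^ (-t) ≤ |(m:ℝ)+1/2| ^ (-t) := h3
    _ = 1 / |(m:ℝ)+1/2| ^ t := by
        rw [Real.rpow_neg (abs_nonneg _)]
        simp

lemma pi_summable {d : ℕ} {t : ℝ} (ht : 1 < t) :
    Summable (fun p : Fin d → ℤ => ∏ i, (1 + |(p i : ℝ)|) ^ (-t)) := by
  induction d with
  | zero =>
      exact summable_of_finite_support (Set.toFinite _)
  | succ n ih =>
      have hF : Summable (fun q : ℤ × (Fin n → ℤ) =>
          (1 + |(q.1 : ℝ)|) ^ (-t) * ∏ i, (1 + |(q.2 i : ℝ)|) ^ (-t)) :=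
        Summable.mul_of_nonneg (f := fun m : ℤ => (1 + |(m : ℝ)|) ^ (-t))
          (g := fun p : Fin n → ℤ => ∏ i, (1 + |(p i : ℝ)|) ^ (-t))
          (int_summable ht) ih
          (fun m => by positivity)
          (fun p => Finset.prod_nonneg fun i _ => by positivity)
      refine ((Fin.consEquiv (fun _ : Fin (n+1) => ℤ)).summable_iff).1 ?_
      refine hF.congr fun q => ?_
      show _ = ∏ i : Fin (n+1), (1 + |((Fin.cons q.1 q.2 : Fin (n+1) → ℤ) i : ℝ)|) ^ (-t)
      rw [Fin.prod_univ_succ]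
      simp


lemma coord_le_norm {d : ℕ} (x : E d) (i : Fin d) : |x i| ≤ ‖x‖ := by
  rw [EuclideanSpace.norm_eq]
  have h1 : |x i| = Real.sqrt (‖x i‖ ^ 2) := by
    rw [Real.sqrt_sq_eq_abs, Real.norm_eq_abs, abs_abs]
  rw [h1]
  apply Real.sqrt_le_sqrt
  exact Finset.single_le_sum (f := fun j => ‖x j‖ ^ 2) (fun j _ => sq_nonneg _) (Finset.mem_univ i)

lemma elem_bound {d : ℕ} {s : ℝ} (hs0 : 0 ≤ s) (x y : E d) :
    (1 + ‖x - y‖) ^ (-s) ≤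
      (2:ℝ) ^ s * ∏ i, (1 + |((⌊x i⌋ - ⌊y i⌋ : ℤ) : ℝ)|) ^ (-(s/d)) := by
  by_cases hd : d = 0
  · subst hd
    have hx : ‖x - y‖ = 0 := by
      rw [EuclideanSpace.norm_eq]; simp
    rw [hx, add_zero, Real.one_rpow]
    have : (∏ i : Fin 0, (1 + |((⌊x i⌋ - ⌊y i⌋ : ℤ) : ℝ)|) ^ (-(s/(0:ℕ)))) = 1 := by
      simp
    rw [this, mul_one]
    exact Real.one_le_rpow one_le_two hs0
  · have hd0 : (0:ℝ) < (d:ℝ) := by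
      exact_mod_cast Nat.pos_of_ne_zero hd
    set r := ‖x - y‖ with hr
    have hr0 : 0 ≤ r := norm_nonneg _
    have key : ∀ i : Fin d, (1 + |((⌊x i⌋ - ⌊y i⌋ : ℤ) : ℝ)|) ≤ 2 * (1 + r) := by
      intro i
      have h1 : |x i - y i| ≤ r := by
        have h := coord_le_norm (x - y) i
        rwa [PiLp.sub_apply] at h
      have hfx := Int.floor_le (x i)
      have hfx' := Int.lt_floor_add_one (x i)
      have hfy := Int.floor_le (y i)
      have hfy' := Int.lt_floor_add_one (y i)
      have habs : |((⌊x i⌋ - ⌊y i⌋ : ℤ) : ℝ)| ≤ |x i - y i| + 1 := by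
        rw [abs_le]
        push_cast
        constructor
        · nlinarith [neg_abs_le (x i - y i)]
        · nlinarith [le_abs_self (x i - y i)]
      nlinarith [abs_nonneg (x i - y i)]
    have hz : -(s/(d:ℝ)) ≤ 0 := neg_nonpos.2 (div_nonneg hs0 hd0.le)
    have hfac : ∀ i : Fin d, (2 * (1 + r)) ^ (-(s/(d:ℝ)))
        ≤ (1 + |((⌊x i⌋ - ⌊y i⌋ : ℤ) : ℝ)|) ^ (-(s/(d:ℝ))) := fun i =>
      Real.rpow_le_rpow_of_nonpos (by positivity) (key i) hz
    have hprod : ((2 * (1 + r)) ^ (-(s/(d:ℝ)))) ^ (d:ℕ)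
        ≤ ∏ i, (1 + |((⌊x i⌋ - ⌊y i⌋ : ℤ) : ℝ)|) ^ (-(s/(d:ℝ))) := by
      calc ((2 * (1 + r)) ^ (-(s/(d:ℝ)))) ^ (d:ℕ)
          = ∏ _i : Fin d, (2 * (1 + r)) ^ (-(s/(d:ℝ))) := by
            rw [Finset.prod_const, Finset.card_univ, Fintype.card_fin]
        _ ≤ _ := Finset.prod_le_prod (fun i _ => by positivity) (fun i _ => hfac i)
    have hpow : ((2 * (1 + r)) ^ (-(s/(d:ℝ)))) ^ (d:ℕ) = (2 * (1 + r)) ^ (-s) := by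
      rw [← Real.rpow_natCast ((2 * (1 + r)) ^ (-(s/(d:ℝ)))) d,
        ← Real.rpow_mul (by positivity)]
      congr 1
      field_simp
    have h2s : (2:ℝ) ^ s * (2:ℝ) ^ (-s) = 1 := by
      rw [← Real.rpow_add two_pos]; simp
    calc (1 + r) ^ (-s) = (2:ℝ)^s * (2:ℝ)^(-s) * (1 + r) ^ (-s) := by rw [h2s, one_mul]
      _ = (2:ℝ)^s * ((2 * (1 + r)) ^ (-s)) := by
          rw [Real.mul_rpow (by norm_num : (0:ℝ) ≤ 2) (by linarith : (0:ℝ) ≤ 1 + r)]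
          ring
      _ = (2:ℝ)^s * ((2 * (1 + r)) ^ (-(s/(d:ℝ)))) ^ (d:ℕ) := by rw [hpow]
      _ ≤ _ := mul_le_mul_of_nonneg_left hprod (by positivity)


lemma weight_bound {d : ℕ} (X : Set (E d)) (N : ℕ)
    (hN : ∀ x : E d, (X ∩ {y | ∀ i, x i ≤ y i ∧ y i ≤ x i + 1}).Finite ∧
      (X ∩ {y | ∀ i, x i ≤ y i ∧ y i ≤ x i + 1}).ncard ≤ N)
    {s : ℝ} (hs : (d:ℝ) < s) :
    ∃ S : ℝ, 1 ≤ S ∧ ∀ k : X,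
      Summable (fun l : X => (1 + ‖(k:E d) - (l:E d)‖) ^ (-s)) ∧
      ∑' l : X, (1 + ‖(k:E d) - (l:E d)‖) ^ (-s) ≤ S := by
  classical
  have hs0 : 0 ≤ s := le_trans (Nat.cast_nonneg d) hs.le
  have hg_sum : Summable (fun p : Fin d → ℤ =>
      (2:ℝ)^s * ∏ i, (1 + |(p i : ℝ)|) ^ (-(s/d))) := by
    by_cases hd : d = 0
    · subst hd; exact summable_of_finite_support (Set.toFinite _)
    · have hd0 : (0:ℝ) < (d:ℝ) := by exact_mod_cast Nat.pos_of_ne_zero hd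
      have ht : 1 < s / d := (one_lt_div hd0).2 hs
      exact (pi_summable ht).mul_left _
  have hg0 : ∀ p : Fin d → ℤ, 0 ≤ (2:ℝ)^s * ∏ i, (1 + |(p i : ℝ)|) ^ (-(s/d)) :=
    fun p => mul_nonneg (Real.rpow_nonneg (by norm_num) _)
      (Finset.prod_nonneg fun i _ => Real.rpow_nonneg (by positivity) _)
  refine ⟨max 1 ((N:ℝ) * ∑' p : Fin d → ℤ,
      (2:ℝ)^s * ∏ i, (1 + |(p i : ℝ)|) ^ (-(s/d))), le_max_left _ _, fun k => ?_⟩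
  have hfiber : ∀ (u : Finset X) (n : Fin d → ℤ),
      (u.filter (fun l : X =>
        (fun i => ⌊(k:E d) i⌋ - ⌊(l:E d) i⌋) = n)).card ≤ N := by
    intro u n
    obtain ⟨hfin, hle⟩ := hN (WithLp.toLp 2 (fun i => ((⌊(k:E d) i⌋ - n i : ℤ) : ℝ)))
    have hmap : ∀ l ∈ u.filter (fun l : X =>
        (fun i => ⌊(k:E d) i⌋ - ⌊(l:E d) i⌋) = n), (l : E d) ∈ hfin.toFinset := by
      intro l hl
      rw [Set.Finite.mem_toFinset]
      rw [Finset.mem_filter] at hl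
      have hfl : ∀ i, ⌊(l:E d) i⌋ = ⌊(k:E d) i⌋ - n i := by
        intro i
        have h : ⌊(k:E d) i⌋ - ⌊(l:E d) i⌋ = n i := congrFun hl.2 i
        linarith
      refine ⟨l.2, fun i => ?_⟩
      constructor
      · show ((⌊(k:E d) i⌋ - n i : ℤ) : ℝ) ≤ (l:E d) i
        rw [← hfl i]; exact Int.floor_le _
      · show (l:E d) i ≤ ((⌊(k:E d) i⌋ - n i : ℤ) : ℝ) + 1
        rw [← hfl i]; exact (Int.lt_floor_add_one _).le
    have hinj : Set.InjOn (fun l : X => (l:E d))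
        (u.filter (fun l : X => (fun i => ⌊(k:E d) i⌋ - ⌊(l:E d) i⌋) = n)) :=
      fun a _ b _ hab => Subtype.ext hab
    have hcard := Finset.card_le_card_of_injOn (fun l : X => (l : E d)) hmap hinj
    rw [← Set.ncard_eq_toFinset_card _ hfin] at hcard
    exact hcard.trans hle
  have hle_g : ∀ l : X, (1 + ‖(k:E d) - (l:E d)‖) ^ (-s)
      ≤ (2:ℝ)^s * ∏ i, (1 + |((⌊(k:E d) i⌋ - ⌊(l:E d) i⌋ : ℤ) : ℝ)|) ^ (-(s/d)) :=
    fun l => elem_bound hs0 (k:E d) (l:E d)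
  have hsum_le : ∀ u : Finset X,
      ∑ l ∈ u, (1 + ‖(k:E d) - (l:E d)‖) ^ (-s)
        ≤ max 1 ((N:ℝ) * ∑' p : Fin d → ℤ,
            (2:ℝ)^s * ∏ i, (1 + |(p i : ℝ)|) ^ (-(s/d))) := by
    intro u
    calc ∑ l ∈ u, (1 + ‖(k:E d) - (l:E d)‖) ^ (-s)
        ≤ ∑ l ∈ u, (2:ℝ)^s * ∏ i,
            (1 + |(((fun i => ⌊(k:E d) i⌋ - ⌊(l:E d) i⌋) : Fin d → ℤ) i : ℝ)|) ^ (-(s/d)) :=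
          Finset.sum_le_sum (fun l _ => hle_g l)
      _ = ∑ n ∈ u.image (fun l : X => (fun i => ⌊(k:E d) i⌋ - ⌊(l:E d) i⌋ : Fin d → ℤ)),
            ∑ l ∈ u.filter (fun l : X => (fun i => ⌊(k:E d) i⌋ - ⌊(l:E d) i⌋ : Fin d → ℤ) = n),
            (2:ℝ)^s * ∏ i,
              (1 + |(((fun i => ⌊(k:E d) i⌋ - ⌊(l:E d) i⌋) : Fin d → ℤ) i : ℝ)|) ^ (-(s/d)) :=
          (Finset.sum_fiberwise_of_maps_to
            (fun l hl => Finset.mem_image_of_mem _ hl) _).symm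
      _ ≤ ∑ n ∈ u.image (fun l : X => (fun i => ⌊(k:E d) i⌋ - ⌊(l:E d) i⌋ : Fin d → ℤ)),
            (N:ℝ) * ((2:ℝ)^s * ∏ i, (1 + |(n i : ℝ)|) ^ (-(s/d))) := by
          apply Finset.sum_le_sum
          intro n hn
          have he : ∑ l ∈ u.filter (fun l : X =>
                (fun i => ⌊(k:E d) i⌋ - ⌊(l:E d) i⌋ : Fin d → ℤ) = n),
              (2:ℝ)^s * ∏ i,
                (1 + |(((fun i => ⌊(k:E d) i⌋ - ⌊(l:E d) i⌋) : Fin d → ℤ) i : ℝ)|) ^ (-(s/d))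
              = ∑ _l ∈ u.filter (fun l : X =>
                (fun i => ⌊(k:E d) i⌋ - ⌊(l:E d) i⌋ : Fin d → ℤ) = n),
              (2:ℝ)^s * ∏ i, (1 + |(n i : ℝ)|) ^ (-(s/d)) := by
            apply Finset.sum_congr rfl
            intro l hl
            rw [(Finset.mem_filter.1 hl).2]
          rw [he, Finset.sum_const, nsmul_eq_mul]
          exact mul_le_mul_of_nonneg_right (by exact_mod_cast hfiber u n) (hg0 n)
      _ = (N:ℝ) * ∑ n ∈ u.image (fun l : X =>
            (fun i => ⌊(k:E d) i⌋ - ⌊(l:E d) i⌋ : Fin d → ℤ)),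
            ((2:ℝ)^s * ∏ i, (1 + |(n i : ℝ)|) ^ (-(s/d))) := by rw [Finset.mul_sum]
      _ ≤ (N:ℝ) * ∑' p : Fin d → ℤ, (2:ℝ)^s * ∏ i, (1 + |(p i : ℝ)|) ^ (-(s/d)) :=
          mul_le_mul_of_nonneg_left
            (Summable.sum_le_tsum _ (fun p _ => hg0 p) hg_sum) (Nat.cast_nonneg N)
      _ ≤ _ := le_max_right _ _
  have hsummable : Summable (fun l : X => (1 + ‖(k:E d) - (l:E d)‖) ^ (-s)) :=
    summable_of_sum_le (fun l => by positivity) hsum_le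
  exact ⟨hsummable, Summable.tsum_le_of_sum_le hsummable hsum_le⟩


lemma cs_tsum {ι : Type*} {u v : ι → ℝ} (hu0 : ∀ i, 0 ≤ u i) (hv0 : ∀ i, 0 ≤ v i)
    (hu : Summable (fun i => u i ^ 2)) (hv : Summable (fun i => v i ^ 2)) :
    Summable (fun i => u i * v i) ∧
      ∑' i, u i * v i ≤ Real.sqrt (∑' i, u i ^ 2) * Real.sqrt (∑' i, v i ^ 2) := by
  have hsum : Summable (fun i => u i * v i) := by
    refine Summable.of_nonneg_of_le (fun i => mul_nonneg (hu0 i) (hv0 i)) (fun i => ?_)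
      ((hu.add hv).div_const 2)
    nlinarith [sq_nonneg (u i - v i)]
  refine ⟨hsum, Summable.tsum_le_of_sum_le hsum (fun F => ?_)⟩
  calc ∑ i ∈ F, u i * v i
      ≤ Real.sqrt (∑ i ∈ F, u i ^ 2) * Real.sqrt (∑ i ∈ F, v i ^ 2) :=
        Real.sum_mul_le_sqrt_mul_sqrt F u v
    _ ≤ Real.sqrt (∑' i, u i ^ 2) * Real.sqrt (∑' i, v i ^ 2) :=
        mul_le_mul (Real.sqrt_le_sqrt (Summable.sum_le_tsum F (fun i _ => sq_nonneg _) hu))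
          (Real.sqrt_le_sqrt (Summable.sum_le_tsum F (fun i _ => sq_nonneg _) hv))
          (Real.sqrt_nonneg _) (Real.sqrt_nonneg _)

lemma schur {ι : Type*} {H : Type*} [NormedAddCommGroup H] [InnerProductSpace ℂ H]
    [CompleteSpace H] (w : ι → ι → ℝ) (S M : ℝ) (hM : 0 ≤ M) (hS0 : 0 ≤ S)
    (hw0 : ∀ k l, 0 ≤ w k l) (hw1 : ∀ k l, w k l ≤ 1)
    (hrow : ∀ k, Summable (w k)) (hrowS : ∀ k, ∑' l, w k l ≤ S)
    (hcol : ∀ l, Summable (fun k => w k l)) (hcolS : ∀ l, ∑' k, w k l ≤ S)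
    (A : ι → ι → H →L[ℂ] H) (hA : ∀ k l, ‖A k l‖ ≤ M * w k l)
    (g : ι → H) (hg : Summable (fun l => ‖g l‖ ^ 2)) :
    (∀ k, Summable (fun l => A k l (g l))) ∧
    Summable (fun k => ‖∑' l, A k l (g l)‖ ^ 2) ∧
    ∑' k, ‖∑' l, A k l (g l)‖ ^ 2 ≤ (S * M) ^ 2 * ∑' l, ‖g l‖ ^ 2 := by
  -- summability of each weighted row of squares
  have hT_each : ∀ k, Summable (fun l => w k l * ‖g l‖ ^ 2) := by
    intro k
    refine Summable.of_nonneg_of_le (fun l => mul_nonneg (hw0 k l) (sq_nonneg _))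
      (fun l => ?_) hg
    calc w k l * ‖g l‖ ^ 2 ≤ 1 * ‖g l‖ ^ 2 :=
          mul_le_mul_of_nonneg_right (hw1 k l) (sq_nonneg _)
      _ = ‖g l‖ ^ 2 := one_mul _
  have hcol_each : ∀ l, Summable (fun k => w k l * ‖g l‖ ^ 2) :=
    fun l => (hcol l).mul_right _
  have hFswap : Summable (fun q : ι × ι => w q.2 q.1 * ‖g q.1‖ ^ 2) := by
    refine (summable_prod_of_nonneg
      (fun q => mul_nonneg (hw0 q.2 q.1) (sq_nonneg _))).2 ⟨fun l => hcol_each l, ?_⟩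
    refine Summable.of_nonneg_of_le
      (fun l => tsum_nonneg (fun k => mul_nonneg (hw0 k l) (sq_nonneg _)))
      (fun l => ?_) (hg.mul_left S)
    show (∑' k, w k l * ‖g l‖ ^ 2) ≤ S * ‖g l‖ ^ 2
    rw [tsum_mul_right]
    exact mul_le_mul_of_nonneg_right (hcolS l) (sq_nonneg _)
  have hF : Summable (fun q : ι × ι => w q.1 q.2 * ‖g q.2‖ ^ 2) := by
    have h := (Equiv.prodComm ι ι).summable_iff.2 hFswap
    exact h.congr (fun q => rfl)
  have hT_sum : Summable (fun k => ∑' l, w k l * ‖g l‖ ^ 2) :=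
    ((summable_prod_of_nonneg
      (fun q => mul_nonneg (hw0 q.1 q.2) (sq_nonneg _))).1 hF).2
  have hT_le : ∑' k, (∑' l, w k l * ‖g l‖ ^ 2) ≤ S * ∑' l, ‖g l‖ ^ 2 := by
    have h1 : ∑' k, (∑' l, w k l * ‖g l‖ ^ 2) = ∑' q : ι × ι, w q.1 q.2 * ‖g q.2‖ ^ 2 :=
      (Summable.tsum_prod' hF (fun k => hT_each k)).symm
    have h2 : ∑' q : ι × ι, w q.1 q.2 * ‖g q.2‖ ^ 2
        = ∑' q : ι × ι, w q.2 q.1 * ‖g q.1‖ ^ 2 := by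
      rw [← (Equiv.prodComm ι ι).tsum_eq (fun q : ι × ι => w q.2 q.1 * ‖g q.1‖ ^ 2)]
      exact tsum_congr (fun q => rfl)
    have h3 : ∑' q : ι × ι, w q.2 q.1 * ‖g q.1‖ ^ 2
        = ∑' l, (∑' k, w k l * ‖g l‖ ^ 2) := Summable.tsum_prod' hFswap (fun l => hcol_each l)
    rw [h1, h2, h3]
    have h4 : ∀ l, (∑' k, w k l * ‖g l‖ ^ 2) ≤ S * ‖g l‖ ^ 2 := by
      intro l
      rw [tsum_mul_right]
      exact mul_le_mul_of_nonneg_right (hcolS l) (sq_nonneg _)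
    calc ∑' l, (∑' k, w k l * ‖g l‖ ^ 2) ≤ ∑' l, S * ‖g l‖ ^ 2 := by
          refine Summable.tsum_le_tsum h4 ?_ (hg.mul_left S)
          exact ((summable_prod_of_nonneg
            (fun q => mul_nonneg (hw0 q.2 q.1) (sq_nonneg _))).1 hFswap).2
      _ = S * ∑' l, ‖g l‖ ^ 2 := tsum_mul_left
  -- Cauchy-Schwarz on rows
  have hcs : ∀ k, Summable (fun l => w k l * ‖g l‖) ∧
      ∑' l, w k l * ‖g l‖
        ≤ Real.sqrt S * Real.sqrt (∑' l, w k l * ‖g l‖ ^ 2) := by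
    intro k
    have hu : Summable (fun l => Real.sqrt (w k l) ^ 2) := by
      refine (hrow k).congr (fun l => ?_)
      rw [Real.sq_sqrt (hw0 k l)]
    have hv : Summable (fun l => (Real.sqrt (w k l) * ‖g l‖) ^ 2) := by
      refine (hT_each k).congr (fun l => ?_)
      rw [mul_pow, Real.sq_sqrt (hw0 k l)]
    obtain ⟨hsum, hle⟩ := cs_tsum (fun l => Real.sqrt_nonneg (w k l))
      (fun l => mul_nonneg (Real.sqrt_nonneg _) (norm_nonneg _)) hu hv
    have huv : ∀ l, Real.sqrt (w k l) * (Real.sqrt (w k l) * ‖g l‖) = w k l * ‖g l‖ := by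
      intro l
      rw [← mul_assoc, Real.mul_self_sqrt (hw0 k l)]
    constructor
    · exact hsum.congr huv
    · have he1 : ∑' l, w k l * ‖g l‖
          = ∑' l, Real.sqrt (w k l) * (Real.sqrt (w k l) * ‖g l‖) :=
        tsum_congr (fun l => (huv l).symm)
      have he2 : ∑' l, Real.sqrt (w k l) ^ 2 = ∑' l, w k l :=
        tsum_congr (fun l => Real.sq_sqrt (hw0 k l))
      have he3 : ∑' l, (Real.sqrt (w k l) * ‖g l‖) ^ 2 = ∑' l, w k l * ‖g l‖ ^ 2 :=
        tsum_congr (fun l => by rw [mul_pow, Real.sq_sqrt (hw0 k l)])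
      rw [he1]
      refine hle.trans ?_
      rw [he2, he3]
      exact mul_le_mul_of_nonneg_right
        (Real.sqrt_le_sqrt (hrowS k))
        (Real.sqrt_nonneg _)
  -- row norm summability
  have hnorms : ∀ k, Summable (fun l => ‖A k l (g l)‖) := by
    intro k
    refine Summable.of_nonneg_of_le (fun l => norm_nonneg _) (fun l => ?_)
      (((hcs k).1).mul_left M)
    calc ‖A k l (g l)‖ ≤ ‖A k l‖ * ‖g l‖ := (A k l).le_opNorm _
      _ ≤ (M * w k l) * ‖g l‖ := mul_le_mul_of_nonneg_right (hA k l) (norm_nonneg _)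
      _ = M * (w k l * ‖g l‖) := by ring
  have hrow_sum : ∀ k, Summable (fun l => A k l (g l)) :=
    fun k => (hnorms k).of_norm
  refine ⟨hrow_sum, ?_⟩
  -- pointwise square bound
  have hTk0 : ∀ k, 0 ≤ ∑' l, w k l * ‖g l‖ ^ 2 :=
    fun k => tsum_nonneg (fun l => mul_nonneg (hw0 k l) (sq_nonneg _))
  have hsq : ∀ k, ‖∑' l, A k l (g l)‖ ^ 2
      ≤ (M ^ 2 * S) * (∑' l, w k l * ‖g l‖ ^ 2) := by
    intro k
    have h1 : ‖∑' l, A k l (g l)‖ ≤ M * (Real.sqrt S * Real.sqrt (∑' l, w k l * ‖g l‖ ^ 2)) := by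
      calc ‖∑' l, A k l (g l)‖ ≤ ∑' l, ‖A k l (g l)‖ := norm_tsum_le_tsum_norm (hnorms k)
        _ ≤ ∑' l, M * (w k l * ‖g l‖) := by
            refine Summable.tsum_le_tsum (fun l => ?_) (hnorms k) (((hcs k).1).mul_left M)
            calc ‖A k l (g l)‖ ≤ ‖A k l‖ * ‖g l‖ := (A k l).le_opNorm _
              _ ≤ (M * w k l) * ‖g l‖ := mul_le_mul_of_nonneg_right (hA k l) (norm_nonneg _)
              _ = M * (w k l * ‖g l‖) := by ring
        _ = M * ∑' l, w k l * ‖g l‖ := tsum_mul_left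
        _ ≤ M * (Real.sqrt S * Real.sqrt (∑' l, w k l * ‖g l‖ ^ 2)) :=
            mul_le_mul_of_nonneg_left ((hcs k).2) hM
    have h2 := pow_le_pow_left₀ (norm_nonneg _) h1 2
    refine h2.trans ?_
    have h3 : (M * (Real.sqrt S * Real.sqrt (∑' l, w k l * ‖g l‖ ^ 2))) ^ 2
        = M ^ 2 * (Real.sqrt S ^ 2 * Real.sqrt (∑' l, w k l * ‖g l‖ ^ 2) ^ 2) := by ring
    rw [h3, Real.sq_sqrt hS0, Real.sq_sqrt (hTk0 k)]
    ring_nf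
    exact le_refl _
  have hsq_sum : Summable (fun k => ‖∑' l, A k l (g l)‖ ^ 2) := by
    refine Summable.of_nonneg_of_le (fun k => sq_nonneg _) hsq ?_
    exact hT_sum.mul_left _
  refine ⟨hsq_sum, ?_⟩
  calc ∑' k, ‖∑' l, A k l (g l)‖ ^ 2
      ≤ ∑' k, (M ^ 2 * S) * (∑' l, w k l * ‖g l‖ ^ 2) :=
        Summable.tsum_le_tsum hsq hsq_sum (hT_sum.mul_left _)
    _ = (M ^ 2 * S) * ∑' k, (∑' l, w k l * ‖g l‖ ^ 2) := tsum_mul_left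
    _ ≤ (M ^ 2 * S) * (S * ∑' l, ‖g l‖ ^ 2) :=
        mul_le_mul_of_nonneg_left hT_le (by positivity)
    _ = (S * M) ^ 2 * ∑' l, ‖g l‖ ^ 2 := by ring


theorem stmt16 {d : ℕ} (X : Set (E d)) (hX : RelSep X) (s : ℝ) (hs : (d : ℝ) < s)
    (H : Type*) [NormedAddCommGroup H] [InnerProductSpace ℂ H] [CompleteSpace H] :
    ∃ C > (0 : ℝ), ∀ (A : X → X → H →L[ℂ] H) (M : ℝ), 0 ≤ M →
      (∀ k l : X, ‖A k l‖ * (1 + ‖(k : E d) - (l : E d)‖) ^ s ≤ M) →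
      ∀ g : X → H, Summable (fun l : X => ‖g l‖ ^ 2) →
        (∀ k : X, Summable (fun l : X => A k l (g l))) ∧
        Summable (fun k : X => ‖∑' l : X, A k l (g l)‖ ^ 2) ∧
        ∑' k : X, ‖∑' l : X, A k l (g l)‖ ^ 2
          ≤ (C * M) ^ 2 * ∑' l : X, ‖g l‖ ^ 2 := by
  obtain ⟨N, hN⟩ := hX
  obtain ⟨S, hS1, hS⟩ := weight_bound X N hN hs
  have hS0 : (0:ℝ) ≤ S := le_trans zero_le_one hS1
  refine ⟨S, lt_of_lt_of_le one_pos hS1, ?_⟩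
  intro A M hM hA g hg
  have hs0 : 0 ≤ s := le_trans (Nat.cast_nonneg d) hs.le
  have hw0 : ∀ k l : X, 0 ≤ (1 + ‖(k:E d) - (l:E d)‖) ^ (-s) :=
    fun k l => Real.rpow_nonneg (by positivity) _
  have hw1 : ∀ k l : X, (1 + ‖(k:E d) - (l:E d)‖) ^ (-s) ≤ 1 :=
    fun k l => Real.rpow_le_one_of_one_le_of_nonpos
      (by linarith [norm_nonneg ((k:E d) - (l:E d))]) (by linarith)
  have hcol : ∀ l : X, Summable (fun k : X => (1 + ‖(k:E d) - (l:E d)‖) ^ (-s)) := by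
    intro l
    refine ((hS l).1).congr (fun k => ?_)
    rw [norm_sub_rev]
  have hcolS : ∀ l : X, ∑' k : X, (1 + ‖(k:E d) - (l:E d)‖) ^ (-s) ≤ S := by
    intro l
    have he : ∑' k : X, (1 + ‖(k:E d) - (l:E d)‖) ^ (-s)
        = ∑' k : X, (1 + ‖(l:E d) - (k:E d)‖) ^ (-s) :=
      tsum_congr (fun k => by rw [norm_sub_rev])
    rw [he]; exact (hS l).2
  have hA' : ∀ k l : X, ‖A k l‖ ≤ M * (1 + ‖(k:E d) - (l:E d)‖) ^ (-s) := by
    intro k l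
    have hb : (0:ℝ) < 1 + ‖(k:E d) - (l:E d)‖ := by positivity
    have hpos : (0:ℝ) < (1 + ‖(k:E d) - (l:E d)‖) ^ s := Real.rpow_pos_of_pos hb s
    rw [Real.rpow_neg hb.le, ← div_eq_mul_inv]
    exact (le_div_iff₀ hpos).2 (hA k l)
  exact schur (fun k l : X => (1 + ‖(k:E d) - (l:E d)‖) ^ (-s)) S M hM hS0
    hw0 hw1 (fun k => (hS k).1) (fun k => (hS k).2) hcol hcolS A hA' g hg
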